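/- arXiv:1311.5083 — 2 statements merged into one kernel-verified Lean document; each statement's English description precedes it below -/
import Mathlib

section
/- With the above assumptions on T: the diameters D_n(ω) = diam(I_{ω_1…ω_n}) converge to 0 uniformly in ω ∈ Σ as n → ∞, and moreover lim_{n→∞} sup_{ω∈Σ} |−(1/n) log D_n(ω) − A_n g(ω)| = 0. -/
open MeasureTheory Set Filter Topology

noncomputable section

/-- A finite measurable partition of the space. -/
def IsMeasPartition {X : Type*} [MeasurableSpace X] (P : Finset (Set X)) : Prop :=
  (∀ s ∈ P, MeasurableSet s) ∧ ((P : Set (Set X)).PairwiseDisjoint id) ∧ (⋃ s ∈ P, s) = univ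

/-- Shannon entropy of the refinement `⋁_{i<n} T^{-i} P` of a finite partition `P`
under the first `n` iterates of `T`, with respect to the measure `μ`. -/
def partEntropy {X : Type*} [MeasurableSpace X] (T : X → X) (μ : Measure X)
    (P : Finset (Set X)) (n : ℕ) : ℝ :=
  ∑ c : Fin n → {s // s ∈ P},
    Real.negMulLog (μ (⋂ i : Fin n, T^[(i : ℕ)] ⁻¹' ((c i : Set X)))).toReal

/-- The Kolmogorov–Sinai (metric) entropy of the measure `μ` for the map `T`:
the supremum over finite measurable partitions `P` of
`lim_n (1/n) H(⋁_{i<n} T^{-i}P)`, the limit being computed as an infimum (by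
subadditivity of the entropy sequence). -/
def metricEntropy {X : Type*} [MeasurableSpace X] (T : X → X) (μ : Measure X) : ℝ :=
  ⨆ P : {P : Finset (Set X) // IsMeasPartition P},
    ⨅ n : ℕ, partEntropy T μ (P : Finset (Set X)) (n + 1) / (n + 1)

/-- Birkhoff (ergodic) average `A_n f(x) = (1/n) ∑_{j<n} f(T^j x)`. -/
def birkhoff {X E : Type*} [AddCommMonoid E] [Module ℝ E]
    (T : X → X) (f : X → E) (n : ℕ) (x : X) : E :=
  (n : ℝ)⁻¹ • ∑ j ∈ Finset.range n, f (T^[j] x)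

/-- The full shift space `Σ = {1,…,m}^ℕ`. -/
abbrev SymbSp (m : ℕ) := ℕ → Fin m

/-- The shift map `σ` on `Σ`. -/
def shift {m : ℕ} (ω : SymbSp m) : SymbSp m := fun n => ω (n + 1)

/-- The set `M(Σ,σ)` of shift-invariant Borel probability measures on `Σ`. -/
def shiftInvMeasures (m : ℕ) : Set (Measure (SymbSp m)) :=
  {μ | IsProbabilityMeasure μ ∧ μ.map shift = μ}

/-- The level set `X_α = {ω ∈ Σ : lim_n A_n f(ω) = α}` of a potential `f` on `Σ`. -/
def symbLevelSet {m : ℕ} {E : Type*} [AddCommMonoid E] [Module ℝ E] [TopologicalSpace E]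
    (f : SymbSp m → E) (α : E) : Set (SymbSp m) :=
  {ω | Tendsto (fun n => birkhoff shift f n ω) atTop (𝓝 α)}

/-- A piecewise `C¹` expanding (possibly non-uniformly hyperbolic) interval map:
`m` pairwise non-overlapping subintervals `I 1, …, I m` of `[0,1]`, a map `T` which
restricted to each `I i` is a `C¹` surjection onto `[0,1]` (with derivative `T'`),
a unique fixed point `fixPt i` of `T` in each `I i`, and `T' > 1` away from the
fixed points. -/
structure PCSystem (m : ℕ) where
  hm : 0 < m
  I : Fin m → Set ℝ
  T : ℝ → ℝ
  T' : ℝ → ℝ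
  fixPt : Fin m → ℝ
  hI : ∀ i, ∃ a b : ℝ, a < b ∧ I i = Icc a b
  hIsub : ∀ i, I i ⊆ Icc 0 1
  hdisj : ∀ i j, i ≠ j → Disjoint (interior (I i)) (interior (I j))
  hTmeas : Measurable T
  hT'meas : Measurable T'
  hmapsto : ∀ i, MapsTo T (I i) (Icc 0 1)
  hsurj : ∀ i, SurjOn T (I i) (Icc 0 1)
  hderiv : ∀ i, ∀ x ∈ I i, HasDerivWithinAt T (T' x) (I i) x
  hT'cont : ∀ i, ContinuousOn T' (I i)
  hfixmem : ∀ i, fixPt i ∈ I i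
  hfix : ∀ i, T (fixPt i) = fixPt i
  hfixuniq : ∀ i, ∀ y ∈ I i, T y = y → y = fixPt i
  hexp : ∀ y ∈ ⋃ i, I i, y ∉ range fixPt → 1 < T' y

namespace PCSystem

variable {m : ℕ} (S : PCSystem m)

/-- The attractor `Λ = {x ∈ ⋃ I_i : T^n x ∈ [0,1] for all n}`. -/
def attractor : Set ℝ :=
  {x | (x ∈ ⋃ i, S.I i) ∧ ∀ n : ℕ, S.T^[n] x ∈ Icc (0:ℝ) 1}

/-- The basic interval `I_w = T_{w₁}∘⋯∘T_{wₙ}([0,1])` coded by the word `w`,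
described via the forward map: `I_{i·w} = I_i ∩ T⁻¹(I_w)`. -/
def cyl (S : PCSystem m) : List (Fin m) → Set ℝ
  | [] => Icc 0 1
  | i :: w => S.I i ∩ S.T ⁻¹' (cyl S w)

end PCSystem

/-- The word `ω₁…ωₙ` of the first `n` symbols of `ω`. -/
def word {m : ℕ} (ω : SymbSp m) (n : ℕ) : List (Fin m) := List.ofFn fun j : Fin n => ω j

namespace PCSystem

variable {m : ℕ} (S : PCSystem m)

/-- The coding map `Π : Σ → Λ`, `Π(ω) = lim_n T_{ω₁}∘⋯∘T_{ωₙ}([0,1])`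
(realized as the supremum of the nested intersection `⋂_n I_{ω|_n}`, which is
a single point). -/
def code (ω : SymbSp m) : ℝ := sSup (⋂ n : ℕ, S.cyl (word ω n))

/-- The geometric potential `g(ω) = −log T'_{ω₁}(Π(σω)) = log T'(Π(ω))`. -/
def g (ω : SymbSp m) : ℝ := Real.log (S.T' (S.code ω))

/-- `Σ̃ = {ω : liminf_n A_n g(ω) > 0}`. -/
def SigmaTilde : Set (SymbSp m) :=
  {ω | 0 < atTop.liminf fun n => birkhoff shift S.g n ω}

/-- The set `M(Λ,T)` of `T`-invariant Borel probability measures on the attractor `Λ`. -/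
def invMeasures : Set (Measure ℝ) :=
  {μ | IsProbabilityMeasure μ ∧ μ.map S.T = μ ∧ μ S.attractorᶜ = 0}

/-- Lyapunov exponent `λ(μ,T) = ∫ log|T'| dμ` of a measure on the attractor. -/
def lyap (μ : Measure ℝ) : ℝ := ∫ x, Real.log |S.T' x| ∂μ

/-- Lyapunov exponent `λ(μ,σ) = ∫ g dμ` of a measure on the shift space. -/
def lyapSymb (μ : Measure (SymbSp m)) : ℝ := ∫ ω, S.g ω ∂μ

/-- The set of parabolic fixed points, i.e. those fixed points `x_j` with `T'(x_j) = 1`. -/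
def parabolicSet : Set ℝ := {y | ∃ i, y = S.fixPt i ∧ S.T' y = 1}

/-- The level set `Λ_α = {x ∈ Λ : lim_n (1/n)∑_{j<n} F(T^j x) = α}`. -/
def levelSet {E : Type*} [AddCommMonoid E] [Module ℝ E] [TopologicalSpace E]
    (F : ℝ → E) (α : E) : Set ℝ :=
  {x | x ∈ S.attractor ∧ Tendsto (fun n => birkhoff S.T F n x) atTop (𝓝 α)}

/-- `Λ̃`: the set of points of the attractor having exactly two codings. -/
def doubleCoded : Set ℝ := {x | x ∈ S.attractor ∧ (S.code ⁻¹' {x}).ncard = 2}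

end PCSystem

namespace PCSystem

variable {m : ℕ} (S : PCSystem m)

lemma T'_ge_one : ∀ i : Fin m, ∀ x ∈ S.I i, 1 ≤ S.T' x := by
  intro i x hx
  by_contra hlt
  push_neg at hlt
  obtain ⟨a, b, hab, hIab⟩ := S.hI i
  -- T' continuous at x within I i, T' x < 1, get relative nbhd where T' < 1
  have hc := S.hT'cont i x hx
  have h1 : {y | S.T' y < 1} ∈ 𝓝[S.I i] x := by
    have := hc (Iio_mem_nhds hlt)
    simpa [Set.preimage] using this
  obtain ⟨δ, hδ, hball⟩ := Metric.mem_nhdsWithin_iff.1 h1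
  -- find an interval of positive length inside ball x δ ∩ I i
  have hxab : x ∈ Icc a b := hIab ▸ hx
  set c := max a (x - δ/2) with hc'
  set d := min b (x + δ/2) with hd'
  have hcd : c < d := by
    rcases hxab with ⟨h1', h2'⟩
    simp only [hc', hd', max_lt_iff, lt_min_iff]
    refine ⟨⟨hab, by linarith⟩, by linarith, by linarith⟩
  have hsub : Icc c d ⊆ {y | S.T' y < 1} := by
    intro y hy
    apply hball
    constructor
    · rw [Metric.mem_ball, Real.dist_eq]
      rcases hy with ⟨hy1, hy2⟩
      rw [abs_lt]
      constructor
      · have : x - δ/2 ≤ c := le_max_right _ _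
        linarith
      · have : d ≤ x + δ/2 := min_le_right _ _
        linarith
    · rw [hIab]
      exact ⟨le_trans (le_max_left _ _) hy.1, le_trans hy.2 (min_le_left _ _)⟩
  obtain ⟨y, hy⟩ := ((Set.Icc_infinite hcd).diff (Set.finite_range S.fixPt)).nonempty
  have hyI : y ∈ S.I i := by
    rw [hIab]
    exact ⟨le_trans (le_max_left _ _) hy.1.1, le_trans hy.1.2 (min_le_left _ _)⟩
  have := S.hexp y (Set.mem_iUnion.2 ⟨i, hyI⟩) hy.2
  have := hsub hy.1
  simp only [Set.mem_setOf_eq] at this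
  linarith


lemma TcontOn (i : Fin m) : ContinuousOn S.T (S.I i) :=
  fun x hx => (S.hderiv i x hx).continuousWithinAt

lemma mvt {i : Fin m} {u v : ℝ} (huv : u < v) (hsub : Icc u v ⊆ S.I i) :
    ∃ ξ ∈ Ioo u v, S.T v - S.T u = S.T' ξ * (v - u) := by
  obtain ⟨a, b, hab, hIab⟩ := S.hI i
  have hsub' : Icc u v ⊆ Icc a b := hIab ▸ hsub
  have hau : a ≤ u := (hsub' ⟨le_refl u, huv.le⟩).1
  have hvb : v ≤ b := (hsub' ⟨huv.le, le_refl v⟩).2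
  have hderivAt : ∀ x ∈ Ioo u v, HasDerivAt S.T (S.T' x) x := by
    intro x hx
    have hxI : x ∈ S.I i := hsub ⟨hx.1.le, hx.2.le⟩
    refine (S.hderiv i x hxI).hasDerivAt ?_
    rw [hIab]
    exact mem_nhds_iff.2 ⟨Ioo u v, Set.Ioo_subset_Icc_self.trans hsub', isOpen_Ioo, hx⟩
  obtain ⟨ξ, hξ, hslope⟩ := exists_hasDerivAt_eq_slope S.T S.T' huv
    ((S.TcontOn i).mono hsub) hderivAt
  have hne : v - u ≠ 0 := sub_ne_zero.2 huv.ne'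
  rw [eq_div_iff hne] at hslope
  exact ⟨ξ, hξ, hslope.symm⟩

lemma expand {i : Fin m} {u v : ℝ} (huv : u ≤ v) (hsub : Icc u v ⊆ S.I i) :
    v - u ≤ S.T v - S.T u := by
  rcases eq_or_lt_of_le huv with rfl|h
  · exact le_of_eq (by ring)
  obtain ⟨ξ, hξ, heq⟩ := S.mvt h hsub
  have h1 : 1 ≤ S.T' ξ := S.T'_ge_one i ξ (hsub ⟨hξ.1.le, hξ.2.le⟩)
  nlinarith

lemma strictMonoOn (i : Fin m) : StrictMonoOn S.T (S.I i) := by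
  intro x hx y hy hxy
  obtain ⟨a, b, hab, hIab⟩ := S.hI i
  have hsub : Icc x y ⊆ S.I i := by
    rw [hIab] at hx hy ⊢
    exact Set.Icc_subset_Icc hx.1 hy.2
  have := S.expand hxy.le hsub
  linarith


lemma Isub_Icc (i : Fin m) {x y : ℝ} (hx : x ∈ S.I i) (hy : y ∈ S.I i) :
    Icc x y ⊆ S.I i := by
  obtain ⟨a, b, hab, hIab⟩ := S.hI i
  rw [hIab] at hx hy ⊢
  exact Set.Icc_subset_Icc hx.1 hy.2

lemma cyl_cons_struct (i : Fin m) {c d : ℝ} (hc : 0 ≤ c) (hcd : c < d) (hd : d ≤ 1) :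
    ∃ u v, u < v ∧ Icc u v ⊆ S.I i ∧ S.T u = c ∧ S.T v = d ∧
      S.I i ∩ S.T ⁻¹' (Icc c d) = Icc u v := by
  obtain ⟨u, hu, hTu⟩ := S.hsurj i ⟨hc, hcd.le.trans hd⟩
  obtain ⟨v, hv, hTv⟩ := S.hsurj i ⟨hc.trans hcd.le, hd⟩
  have huv : u < v := by
    rw [← (S.strictMonoOn i).lt_iff_lt hu hv, hTu, hTv]; exact hcd
  have hIcc : Icc u v ⊆ S.I i := S.Isub_Icc i hu hv
  refine ⟨u, v, huv, hIcc, hTu, hTv, ?_⟩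
  ext x
  constructor
  · rintro ⟨hxI, hxT⟩
    simp only [Set.mem_preimage, Set.mem_Icc] at hxT
    constructor
    · by_contra hlt
      push_neg at hlt
      have := (S.strictMonoOn i) hxI hu hlt
      rw [hTu] at this
      linarith [hxT.1]
    · by_contra hlt
      push_neg at hlt
      have := (S.strictMonoOn i) hv hxI hlt
      rw [hTv] at this
      linarith [hxT.2]
  · intro hx
    have hxI : x ∈ S.I i := hIcc hx
    refine ⟨hxI, ?_⟩
    simp only [Set.mem_preimage, Set.mem_Icc]
    constructor
    · rw [← hTu]; exact (S.strictMonoOn i).monotoneOn hu hxI hx.1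
    · rw [← hTv]; exact (S.strictMonoOn i).monotoneOn hxI hv hx.2

lemma cylStruct : ∀ w : List (Fin m), ∃ c d : ℝ, 0 ≤ c ∧ c < d ∧ d ≤ 1 ∧ S.cyl w = Icc c d := by
  intro w
  induction w with
  | nil => exact ⟨0, 1, le_refl 0, zero_lt_one, le_refl 1, rfl⟩
  | cons i w ih =>
    obtain ⟨c, d, hc, hcd, hd, hcyl⟩ := ih
    obtain ⟨u, v, huv, hIcc, hTu, hTv, heq⟩ := S.cyl_cons_struct i hc hcd hd
    have h01 : Icc u v ⊆ Icc (0:ℝ) 1 := hIcc.trans (S.hIsub i)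
    refine ⟨u, v, (h01 ⟨le_refl u, huv.le⟩).1, huv, (h01 ⟨huv.le, le_refl v⟩).2, ?_⟩
    show S.I i ∩ S.T ⁻¹' (S.cyl w) = Icc u v
    rw [hcyl]
    exact heq

lemma cyl_subset_unit (w : List (Fin m)) : S.cyl w ⊆ Icc (0:ℝ) 1 := by
  obtain ⟨c, d, hc, hcd, hd, hcyl⟩ := S.cylStruct w
  rw [hcyl]
  exact Set.Icc_subset_Icc hc hd

lemma cyl_nonempty (w : List (Fin m)) : (S.cyl w).Nonempty := by
  obtain ⟨c, d, hc, hcd, hd, hcyl⟩ := S.cylStruct w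
  rw [hcyl]
  exact Set.nonempty_Icc.2 hcd.le

lemma diam_cyl_pos (w : List (Fin m)) : 0 < Metric.diam (S.cyl w) := by
  obtain ⟨c, d, hc, hcd, hd, hcyl⟩ := S.cylStruct w
  rw [hcyl, Real.diam_Icc hcd.le]
  linarith

lemma diam_cyl_le_one (w : List (Fin m)) : Metric.diam (S.cyl w) ≤ 1 := by
  obtain ⟨c, d, hc, hcd, hd, hcyl⟩ := S.cylStruct w
  rw [hcyl, Real.diam_Icc hcd.le]
  linarith

lemma cyl_append_subset (w w' : List (Fin m)) : S.cyl (w ++ w') ⊆ S.cyl w := by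
  induction w with
  | nil => exact S.cyl_subset_unit w'
  | cons i w ih =>
    show S.I i ∩ S.T ⁻¹' (S.cyl (w ++ w')) ⊆ S.I i ∩ S.T ⁻¹' (S.cyl w)
    exact Set.inter_subset_inter_right _ (Set.preimage_mono ih)


lemma mvt_cyl (i : Fin m) (w : List (Fin m)) :
    ∃ ξ ∈ S.cyl (i :: w), 1 ≤ S.T' ξ ∧
      Metric.diam (S.cyl w) = S.T' ξ * Metric.diam (S.cyl (i :: w)) := by
  obtain ⟨c, d, hc, hcd, hd, hcyl⟩ := S.cylStruct w
  obtain ⟨u, v, huv, hIcc, hTu, hTv, heq⟩ := S.cyl_cons_struct i hc hcd hd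
  have hcons : S.cyl (i :: w) = Icc u v := by
    show S.I i ∩ S.T ⁻¹' (S.cyl w) = Icc u v
    rw [hcyl]; exact heq
  obtain ⟨ξ, hξ, hslope⟩ := S.mvt huv hIcc
  have hξI : ξ ∈ S.I i := hIcc ⟨hξ.1.le, hξ.2.le⟩
  refine ⟨ξ, by rw [hcons]; exact ⟨hξ.1.le, hξ.2.le⟩, S.T'_ge_one i ξ hξI, ?_⟩
  rw [hcyl, hcons, Real.diam_Icc hcd.le, Real.diam_Icc huv.le, ← hTu, ← hTv]
  exact hslope

lemma bounded_cyl (w : List (Fin m)) : Bornology.IsBounded (S.cyl w) :=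
  (Metric.isBounded_Icc 0 1).subset (S.cyl_subset_unit w)

lemma diam_cyl_cons_le (i : Fin m) (w : List (Fin m)) :
    Metric.diam (S.cyl (i :: w)) ≤ Metric.diam (S.cyl w) := by
  obtain ⟨ξ, _, h1, heq⟩ := S.mvt_cyl i w
  nlinarith [S.diam_cyl_pos (i :: w), heq]

lemma word_length {ω : SymbSp m} {n : ℕ} : (word ω n).length = n := by
  simp [word]

lemma word_succ_head (ω : SymbSp m) (n : ℕ) :
    word ω (n + 1) = ω 0 :: word (shift ω) n := by
  simp [word, List.ofFn_succ, shift]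

lemma word_succ_concat (ω : SymbSp m) (n : ℕ) :
    word ω (n + 1) = word ω n ++ [ω n] := by
  rw [word, List.ofFn_succ']
  simp [word, List.concat_eq_append]

lemma diam_word_antitone (ω : SymbSp m) : Antitone (fun n => Metric.diam (S.cyl (word ω n))) := by
  apply antitone_nat_of_succ_le
  intro n
  rw [word_succ_concat]
  exact Metric.diam_mono (S.cyl_append_subset _ _) (S.bounded_cyl _)


lemma cyl_word_antitone_subset (ω : SymbSp m) : ∀ {n k : ℕ}, n ≤ k →
    S.cyl (word ω k) ⊆ S.cyl (word ω n) := by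
  intro n k hnk
  induction k with
  | zero => simp_all
  | succ k ih =>
    rcases Nat.lt_or_ge n (k+1) with h|h
    · have h1 : S.cyl (word ω (k+1)) ⊆ S.cyl (word ω k) := by
        rw [word_succ_concat]
        exact S.cyl_append_subset _ _
      exact h1.trans (ih (Nat.lt_succ_iff.1 h))
    · have : n = k + 1 := le_antisymm hnk h
      subst this
      exact subset_rfl

lemma iInter_cyl_Icc (ω : SymbSp m) {ε : ℝ}
    (hε : ∀ n, ε ≤ Metric.diam (S.cyl (word ω n))) :
    ∃ u v : ℝ, ε ≤ v - u ∧ (⋂ n, S.cyl (word ω n)) = Icc u v := by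
  choose c d hc hcd hd hcyl using fun n => S.cylStruct (word ω n)
  have hdiam : ∀ n, Metric.diam (S.cyl (word ω n)) = d n - c n := by
    intro n; rw [hcyl n, Real.diam_Icc (hcd n).le]
  have hbddc : BddAbove (Set.range c) := ⟨1, by rintro x ⟨n, rfl⟩; exact (hcd n).le.trans (hd n)⟩
  have hbddd : BddBelow (Set.range d) := ⟨0, by rintro x ⟨n, rfl⟩; exact (hc n).trans (hcd n).le⟩
  have hmono : ∀ {n k}, n ≤ k → c n ≤ c k ∧ d k ≤ d n := by
    intro n k hnk
    have hsub : Icc (c k) (d k) ⊆ Icc (c n) (d n) := by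
      rw [← hcyl n, ← hcyl k]
      exact S.cyl_word_antitone_subset ω hnk
    have h1 := hsub ⟨le_refl _, (hcd k).le⟩
    have h2 := hsub ⟨(hcd k).le, le_refl _⟩
    exact ⟨h1.1, h2.2⟩
  set u := ⨆ n, c n with hu
  set v := ⨅ n, d n with hv
  have hcu : ∀ n, c n ≤ u := fun n => le_ciSup hbddc n
  have hdv : ∀ n, v ≤ d n := fun n => ciInf_le hbddd n
  have hkey : ∀ j, u + ε ≤ d j := by
    intro j
    have : ∀ n, c n ≤ d j - ε := by
      intro n
      have h1 := (hmono (le_max_left n j)).1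
      have h2 := (hmono (le_max_right n j)).2
      have h3 := hε (max n j)
      rw [hdiam] at h3
      linarith
    have := ciSup_le this
    linarith [this]
  have huv : u + ε ≤ v := le_ciInf hkey
  refine ⟨u, v, by linarith, ?_⟩
  ext x
  simp only [Set.mem_iInter, Set.mem_Icc]
  constructor
  · intro h
    have h' : ∀ n, c n ≤ x ∧ x ≤ d n := by
      intro n
      have := h n
      rw [hcyl n] at this
      exact this
    exact ⟨ciSup_le (fun n => (h' n).1), le_ciInf (fun n => (h' n).2)⟩
  · intro ⟨h1, h2⟩ n
    rw [hcyl n]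
    exact ⟨(hcu n).trans h1, h2.trans (hdv n)⟩

lemma T_mem_iInter {ω : SymbSp m} {x : ℝ} (hx : x ∈ ⋂ n, S.cyl (word ω n)) :
    S.T x ∈ ⋂ n, S.cyl (word (shift ω) n) := by
  rw [Set.mem_iInter] at hx ⊢
  intro n
  have := hx (n + 1)
  rw [word_succ_head] at this
  exact this.2

lemma mem_I_of_mem_iInter {ω : SymbSp m} {x : ℝ} (hx : x ∈ ⋂ n, S.cyl (word ω n)) :
    x ∈ S.I (ω 0) := by
  rw [Set.mem_iInter] at hx
  have := hx 1
  rw [word_succ_head] at this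
  exact this.1


lemma exists_bound : ∃ M : ℝ, 1 ≤ M ∧ ∀ i : Fin m, ∀ x ∈ S.I i, S.T' x ≤ M := by
  haveI : Nonempty (Fin m) := ⟨⟨0, S.hm⟩⟩
  have h : ∀ i : Fin m, ∃ Mi : ℝ, ∀ x ∈ S.I i, S.T' x ≤ Mi := by
    intro i
    obtain ⟨a, b, hab, hIab⟩ := S.hI i
    have hcpt : IsCompact (S.I i) := hIab ▸ isCompact_Icc
    obtain ⟨x₀, hx₀, hmax⟩ := hcpt.exists_isMaxOn (hIab ▸ Set.nonempty_Icc.2 hab.le) (S.hT'cont i)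
    exact ⟨S.T' x₀, fun x hx => hmax hx⟩
  choose Mf hMf using h
  refine ⟨max 1 (Finset.univ.sup' Finset.univ_nonempty Mf), le_max_left _ _, ?_⟩
  intro i x hx
  exact (hMf i x hx).trans ((Finset.le_sup' Mf (Finset.mem_univ i)).trans (le_max_right _ _))

lemma exists_kappa {r : ℝ} (hr : 0 < r) :
    ∃ κ : ℝ, 1 < κ ∧ ∀ i : Fin m, ∀ x ∈ S.I i, (∀ j, r ≤ |x - S.fixPt j|) → κ ≤ S.T' x := by
  haveI : Nonempty (Fin m) := ⟨⟨0, S.hm⟩⟩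
  have h : ∀ i : Fin m, ∃ κi : ℝ, 1 < κi ∧ ∀ x ∈ S.I i, (∀ j, r ≤ |x - S.fixPt j|) → κi ≤ S.T' x := by
    intro i
    set C := S.I i ∩ {x : ℝ | ∀ j, r ≤ |x - S.fixPt j|} with hC
    have hCclosed : IsClosed {x : ℝ | ∀ j, r ≤ |x - S.fixPt j|} := by
      have : {x : ℝ | ∀ j, r ≤ |x - S.fixPt j|} = ⋂ j, {x : ℝ | r ≤ |x - S.fixPt j|} := by
        ext x; simp
      rw [this]
      exact isClosed_iInter fun j =>
        isClosed_le continuous_const ((continuous_id.sub continuous_const).abs)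
    obtain ⟨a, b, hab, hIab⟩ := S.hI i
    have hcpt : IsCompact C := ((hIab ▸ isCompact_Icc : IsCompact (S.I i)).inter_right hCclosed)
    rcases C.eq_empty_or_nonempty with hem | hne
    · refine ⟨2, one_lt_two, fun x hx hdist => absurd (show x ∈ C from ⟨hx, hdist⟩) ?_⟩
      rw [hem]
      exact Set.notMem_empty x
    · obtain ⟨x₀, hx₀, hmin⟩ := hcpt.exists_isMinOn hne ((S.hT'cont i).mono Set.inter_subset_left)
      have hx₀ne : x₀ ∉ Set.range S.fixPt := by
        rintro ⟨j, rfl⟩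
        have := hx₀.2 j
        simp at this
        linarith
      have h1 : 1 < S.T' x₀ := S.hexp x₀ (Set.mem_iUnion.2 ⟨i, hx₀.1⟩) hx₀ne
      exact ⟨S.T' x₀, h1, fun x hx hdist => hmin ⟨hx, hdist⟩⟩
  choose K hK1 hK2 using h
  refine ⟨Finset.univ.inf' Finset.univ_nonempty K, ?_, ?_⟩
  · rw [Finset.lt_inf'_iff]
    exact fun i _ => hK1 i
  · intro i x hx hdist
    exact (Finset.inf'_le K (Finset.mem_univ i)).trans (hK2 i x hx hdist)

lemma ftc {i : Fin m} {u v : ℝ} (huv : u ≤ v) (hsub : Icc u v ⊆ S.I i) :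
    S.T v - S.T u = ∫ x in Set.Ioc u v, S.T' x := by
  obtain ⟨M, hM1, hM⟩ := S.exists_bound
  have hint : IntegrableOn S.T' (Set.Ioc u v) volume := by
    apply Measure.integrableOn_of_bounded (M := M)
    · rw [Real.volume_Ioc]; exact ENNReal.ofReal_ne_top
    · exact S.hT'meas.aestronglyMeasurable
    · refine ae_restrict_of_forall_mem measurableSet_Ioc ?_
      intro x hx
      have hxI : x ∈ S.I i := hsub ⟨hx.1.le, hx.2⟩
      rw [Real.norm_eq_abs, abs_of_nonneg (by linarith [S.T'_ge_one i x hxI])]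
      exact hM i x hxI
  have hii : IntervalIntegrable S.T' volume u v :=
    (intervalIntegrable_iff_integrableOn_Ioc_of_le huv).2 hint
  have hcont : ContinuousOn S.T (Icc u v) := (S.TcontOn i).mono hsub
  have hderivR : ∀ x ∈ Ioo u v, HasDerivWithinAt S.T (S.T' x) (Ioi x) x := by
    intro x hx
    obtain ⟨a, b, hab, hIab⟩ := S.hI i
    have hsub' : Icc u v ⊆ Icc a b := hIab ▸ hsub
    have hxI : x ∈ S.I i := hsub ⟨hx.1.le, hx.2.le⟩
    exact ((S.hderiv i x hxI).hasDerivAt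
      (hIab ▸ mem_nhds_iff.2 ⟨Ioo u v, Set.Ioo_subset_Icc_self.trans hsub', isOpen_Ioo, hx⟩)).hasDerivWithinAt
  have := intervalIntegral.integral_eq_sub_of_hasDeriv_right_of_le huv hcont hderivR hii
  rw [← this, intervalIntegral.integral_of_le huv]


lemma gain {ε : ℝ} (hε : 0 < ε) :
    ∃ cg : ℝ, 0 < cg ∧ ∀ i : Fin m, ∀ u v : ℝ, ε ≤ v - u → Icc u v ⊆ S.I i →
      v - u + cg ≤ S.T v - S.T u := by
  set r : ℝ := ε / (4 * m) with hrdef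
  have hm' : (0:ℝ) < m := by exact_mod_cast S.hm
  have hr : 0 < r := by positivity
  obtain ⟨κ, hκ1, hκ⟩ := S.exists_kappa hr
  refine ⟨(κ - 1) * (ε / 2), by nlinarith, ?_⟩
  intro i u v hεuv hsub
  have huv : u < v := by linarith
  set G : Set ℝ := {x : ℝ | ∀ j, r ≤ |x - S.fixPt j|} with hG
  have hGmeas : MeasurableSet G := by
    have : G = ⋂ j, {x : ℝ | r ≤ |x - S.fixPt j|} := by ext x; simp [hG]
    rw [this]
    exact MeasurableSet.iInter fun j =>
      measurableSet_le measurable_const ((measurable_id.sub measurable_const).abs)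
  set A : Set ℝ := Set.Ioc u v ∩ G with hA
  set B : Set ℝ := Set.Ioc u v \ G with hB
  have hAmeas : MeasurableSet A := measurableSet_Ioc.inter hGmeas
  have hBmeas : MeasurableSet B := measurableSet_Ioc.diff hGmeas
  have hApart : A ∪ B = Set.Ioc u v := Set.inter_union_diff _ _
  have hABdisj : Disjoint A B := Set.disjoint_sdiff_right.mono_left Set.inter_subset_right
  -- finiteness of measures
  have hIocfin : volume (Set.Ioc u v) ≠ ⊤ := by rw [Real.volume_Ioc]; exact ENNReal.ofReal_ne_top
  have hAfin : volume A ≠ ⊤ := fun h => hIocfin (top_le_iff.1 (h ▸ measure_mono (hApart ▸ Set.subset_union_left : A ⊆ Set.Ioc u v)))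
  have hBfin : volume B ≠ ⊤ := fun h => hIocfin (top_le_iff.1 (h ▸ measure_mono (Set.diff_subset : B ⊆ Set.Ioc u v)))
  -- B is small: B ⊆ ⋃ balls of radius r
  have hBsub : B ⊆ ⋃ j, Metric.ball (S.fixPt j) r := by
    intro x hx
    rcases hx with ⟨hx1, hx2⟩
    simp only [hG, Set.mem_setOf_eq, not_forall, not_le] at hx2
    obtain ⟨j, hj⟩ := hx2
    exact Set.mem_iUnion.2 ⟨j, by rw [Metric.mem_ball, Real.dist_eq]; exact hj⟩
  have hBvol : (volume B).toReal ≤ ε / 2 := by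
    have h1 : volume B ≤ ∑' j : Fin m, volume (Metric.ball (S.fixPt j) r) :=
      le_trans (measure_mono hBsub) (measure_iUnion_le _)
    have h2 : ∑' j : Fin m, volume (Metric.ball (S.fixPt j) r) = (m : ENNReal) * ENNReal.ofReal (2 * r) := by
      simp [Real.volume_ball, tsum_fintype, Finset.sum_const, Finset.card_univ, nsmul_eq_mul]
    have h3 : (m : ENNReal) * ENNReal.ofReal (2 * r) = ENNReal.ofReal (ε / 2) := by
      rw [← ENNReal.ofReal_natCast, ← ENNReal.ofReal_mul (by positivity)]
      congr 1
      field_simp [hrdef]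
      rw [hrdef]; field_simp; norm_num
    calc (volume B).toReal ≤ (ENNReal.ofReal (ε / 2)).toReal := by
          apply ENNReal.toReal_mono ENNReal.ofReal_ne_top
          rw [← h3, ← h2]; exact h1
      _ = ε / 2 := ENNReal.toReal_ofReal (by positivity)
  -- measure additivity
  have hadd : (volume A).toReal + (volume B).toReal = v - u := by
    have := measure_union (μ := volume) hABdisj hBmeas
    rw [hApart] at this
    rw [Real.volume_Ioc] at this
    have h4 : (volume A).toReal + (volume B).toReal = ((volume A) + (volume B)).toReal :=
      (ENNReal.toReal_add hAfin hBfin).symm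
    rw [h4, ← this, ENNReal.toReal_ofReal (by linarith)]
  have hAvol : ε / 2 ≤ (volume A).toReal := by linarith
  -- integral bounds
  obtain ⟨M, hM1, hM⟩ := S.exists_bound
  have hint : IntegrableOn S.T' (Set.Ioc u v) volume := by
    apply Measure.integrableOn_of_bounded (M := M)
    · exact hIocfin
    · exact S.hT'meas.aestronglyMeasurable
    · refine ae_restrict_of_forall_mem measurableSet_Ioc ?_
      intro x hx
      have hxI : x ∈ S.I i := hsub ⟨hx.1.le, hx.2⟩
      rw [Real.norm_eq_abs, abs_of_nonneg (by linarith [S.T'_ge_one i x hxI])]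
      exact hM i x hxI
  have hintA : IntegrableOn S.T' A volume := hint.mono_set (hApart ▸ Set.subset_union_left)
  have hintB : IntegrableOn S.T' B volume := hint.mono_set Set.diff_subset
  have hsplit : ∫ x in Set.Ioc u v, S.T' x = (∫ x in A, S.T' x) + ∫ x in B, S.T' x := by
    rw [← hApart]
    exact setIntegral_union hABdisj hBmeas hintA hintB
  have hboundA : κ * (volume A).toReal ≤ ∫ x in A, S.T' x := by
    apply setIntegral_ge_of_const_le_real hAmeas hAfin
    · intro x hx
      exact hκ i x (hsub ⟨hx.1.1.le, hx.1.2⟩) hx.2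
    · exact hintA
  have hboundB : 1 * (volume B).toReal ≤ ∫ x in B, S.T' x := by
    apply setIntegral_ge_of_const_le_real hBmeas hBfin
    · intro x hx
      exact S.T'_ge_one i x (hsub ⟨hx.1.1.le, hx.1.2⟩)
    · exact hintB
  have hftc := S.ftc huv.le hsub
  rw [hftc, hsplit]
  have : v - u + (κ - 1) * (ε/2) ≤ κ * (volume A).toReal + 1 * (volume B).toReal := by
    nlinarith [hAvol, hadd]
  linarith [hboundA, hboundB, this]


lemma diam_word_shift_le (ω : SymbSp m) (n : ℕ) :
    Metric.diam (S.cyl (word ω (n + 1))) ≤ Metric.diam (S.cyl (word (shift ω) n)) := by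
  rw [word_succ_head]
  obtain ⟨ξ, _, h1, heq⟩ := S.mvt_cyl (ω 0) (word (shift ω) n)
  nlinarith [S.diam_cyl_pos (ω 0 :: word (shift ω) n), heq]

theorem uniform_diam {ε : ℝ} (hε : 0 < ε) :
    ∃ N : ℕ, ∀ n ≥ N, ∀ ω : SymbSp m, Metric.diam (S.cyl (word ω n)) < ε := by
  by_contra hcon
  push_neg at hcon
  -- for every N there is ω with ε ≤ diam (cyl (word ω N))
  have hwit : ∀ N : ℕ, ∃ ω : SymbSp m, ε ≤ Metric.diam (S.cyl (word ω N)) := by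
    intro N
    obtain ⟨n, hn, ω, hω⟩ := hcon N
    exact ⟨ω, le_trans hω (S.diam_word_antitone ω hn)⟩
  set F : ℕ → Set (SymbSp m) := fun N => {ω | ε ≤ Metric.diam (S.cyl (word ω N))} with hF
  have hFclosed : ∀ N, IsClosed (F N) := by
    intro N
    have : F N = (fun (ω : SymbSp m) (j : Fin N) => ω j) ⁻¹'
        {f : Fin N → Fin m | ε ≤ Metric.diam (S.cyl (List.ofFn f))} := rfl
    rw [this]
    exact (isClosed_discrete _).preimage (continuous_pi fun j => continuous_apply _)
  have hFdec : ∀ N, F (N + 1) ⊆ F N := by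
    intro N ω hω
    exact le_trans hω (S.diam_word_antitone ω (Nat.le_succ N))
  have hFne : ∀ N, (F N).Nonempty := hwit
  haveI : Nonempty (Fin m) := ⟨⟨0, S.hm⟩⟩
  obtain ⟨om, hom⟩ := IsCompact.nonempty_iInter_of_sequence_nonempty_isCompact_isClosed F
    hFdec hFne ((hFclosed 0).isCompact) hFclosed
  have hbig : ∀ N, ε ≤ Metric.diam (S.cyl (word om N)) := by
    intro N
    exact Set.mem_iInter.1 hom N
  -- diameters of shifted sequences stay ≥ ε
  have hbig' : ∀ k n, ε ≤ Metric.diam (S.cyl (word (shift^[k] om) n)) := by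
    intro k
    induction k with
    | zero => exact fun n => hbig n
    | succ k ih =>
      intro n
      rw [Function.iterate_succ_apply']
      exact le_trans (le_trans (ih (n+1)) (S.diam_word_shift_le (shift^[k] om) n)) (le_refl _)
  obtain ⟨cg, hcg, hgain⟩ := S.gain hε
  -- nested interval for each shift
  have hJ : ∀ k, ∃ u v : ℝ, ε ≤ v - u ∧ (⋂ n, S.cyl (word (shift^[k] om) n)) = Icc u v :=
    fun k => S.iInter_cyl_Icc (shift^[k] om) (hbig' k)
  choose u v huv hIcc using hJ
  have hsubI : ∀ k, Icc (u k) (v k) ⊆ S.I ((shift^[k] om) 0) := by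
    intro k x hx
    rw [← hIcc k] at hx
    exact S.mem_I_of_mem_iInter hx
  have hstep : ∀ k, v k - u k + cg ≤ v (k+1) - u (k+1) := by
    intro k
    have huk : u k ∈ Icc (u k) (v k) := ⟨le_refl _, by linarith [huv k]⟩
    have hvk : v k ∈ Icc (u k) (v k) := ⟨by linarith [huv k], le_refl _⟩
    have hTu : S.T (u k) ∈ Icc (u (k+1)) (v (k+1)) := by
      rw [← hIcc (k+1), Function.iterate_succ_apply' shift k om]
      exact S.T_mem_iInter (by rw [hIcc k]; exact huk)
    have hTv : S.T (v k) ∈ Icc (u (k+1)) (v (k+1)) := by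
      rw [← hIcc (k+1), Function.iterate_succ_apply' shift k om]
      exact S.T_mem_iInter (by rw [hIcc k]; exact hvk)
    have := hgain _ (u k) (v k) (huv k) (hsubI k)
    have h1 := hTu.1
    have h2 := hTv.2
    linarith
  have hgrow : ∀ k, ε + k * cg ≤ v k - u k := by
    intro k
    induction k with
    | zero => simpa using huv 0
    | succ k ih =>
      have := hstep k
      push_cast
      linarith
  have hle1 : ∀ k, v k - u k ≤ 1 := by
    intro k
    have h0 : u k ∈ Icc (0:ℝ) 1 := S.hIsub _ (hsubI k ⟨le_refl _, by linarith [huv k]⟩)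
    have h1 : v k ∈ Icc (0:ℝ) 1 := S.hIsub _ (hsubI k ⟨by linarith [huv k], le_refl _⟩)
    rcases h0 with ⟨h0a, _⟩
    rcases h1 with ⟨_, h1b⟩
    linarith
  obtain ⟨k, hk⟩ := exists_nat_gt ((1 - ε) / cg)
  have : (1 - ε) / cg * cg < k * cg := by
    exact (mul_lt_mul_iff_of_pos_right hcg).2 hk
  rw [div_mul_cancel₀ _ hcg.ne'] at this
  linarith [hgrow k, hle1 k]


lemma code_mem_iInter (ω : SymbSp m) : S.code ω ∈ ⋂ n, S.cyl (word ω n) := by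
  obtain ⟨u, v, huv, hIcc⟩ := S.iInter_cyl_Icc ω (ε := 0)
    (fun n => Metric.diam_nonneg)
  rw [code, hIcc, csSup_Icc (by linarith)]
  exact ⟨by linarith, le_refl v⟩

lemma code_mem (ω : SymbSp m) (n : ℕ) : S.code ω ∈ S.cyl (word ω n) :=
  Set.mem_iInter.1 (S.code_mem_iInter ω) n

lemma log_T'_bound : ∃ B : ℝ, 0 ≤ B ∧ ∀ w : List (Fin m), w ≠ [] →
    ∀ x ∈ S.cyl w, |Real.log (S.T' x)| ≤ B := by
  obtain ⟨M, hM1, hM⟩ := S.exists_bound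
  refine ⟨Real.log M, Real.log_nonneg hM1, ?_⟩
  rintro (_|⟨i, w⟩) hw x hx
  · exact absurd rfl hw
  have hxI : x ∈ S.I i := hx.1
  have h1 : 1 ≤ S.T' x := S.T'_ge_one i x hxI
  rw [abs_of_nonneg (Real.log_nonneg h1)]
  exact Real.log_le_log (by linarith) (hM i x hxI)

lemma log_diam_eq (n : ℕ) (ω : SymbSp m) :
    ∃ ξ : ℕ → ℝ, (∀ j, j < n → ξ j ∈ S.cyl (word (shift^[j] ω) (n - j))) ∧
      Real.log (Metric.diam (S.cyl (word ω n))) = -∑ j ∈ Finset.range n, Real.log (S.T' (ξ j)) := by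
  induction n generalizing ω with
  | zero =>
    refine ⟨fun _ => 0, fun j hj => absurd hj (Nat.not_lt_zero j), ?_⟩
    show Real.log (Metric.diam (S.cyl (word ω 0))) = _
    have : word ω 0 = ([] : List (Fin m)) := rfl
    rw [this]
    show Real.log (Metric.diam (Icc (0:ℝ) 1)) = _
    rw [Real.diam_Icc zero_le_one]
    simp
  | succ n ih =>
    obtain ⟨ξ', hmem', heq'⟩ := ih (shift ω)
    obtain ⟨ξ₀, hξ₀, hT'1, hdiam⟩ := S.mvt_cyl (ω 0) (word (shift ω) n)
    refine ⟨fun j => if j = 0 then ξ₀ else ξ' (j - 1), ?_, ?_⟩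
    · intro j hj
      cases j with
      | zero =>
        simp only [if_pos rfl]
        rw [Function.iterate_zero_apply, Nat.sub_zero, word_succ_head]
        exact hξ₀
      | succ j' =>
        simp only [Nat.succ_ne_zero, if_false, Nat.succ_sub_one]
        have h1 : n + 1 - (j' + 1) = n - j' := by omega
        rw [h1, Function.iterate_succ_apply]
        exact hmem' j' (Nat.lt_of_succ_lt_succ hj)
    · have hpos := S.diam_cyl_pos (ω 0 :: word (shift ω) n)
      have hT'pos : (0:ℝ) < S.T' ξ₀ := by linarith
      have hlog : Real.log (Metric.diam (S.cyl (word (shift ω) n))) =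
          Real.log (S.T' ξ₀) + Real.log (Metric.diam (S.cyl (ω 0 :: word (shift ω) n))) := by
        rw [hdiam, Real.log_mul hT'pos.ne' hpos.ne']
      rw [word_succ_head, Finset.sum_range_succ']
      have e1 : ∀ j : ℕ, (if j + 1 = 0 then ξ₀ else ξ' (j + 1 - 1)) = ξ' j := fun j => by simp
      simp only [e1, if_true, if_pos trivial]
      rw [heq'] at hlog
      linarith

lemma osc {η : ℝ} (hη : 0 < η) : ∃ K : ℕ, 1 ≤ K ∧ ∀ w : List (Fin m), K ≤ w.length →
    ∀ x ∈ S.cyl w, ∀ y ∈ S.cyl w, |Real.log (S.T' x) - Real.log (S.T' y)| ≤ η := by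
  haveI : Nonempty (Fin m) := ⟨⟨0, S.hm⟩⟩
  have hcont : ∀ i : Fin m, ContinuousOn (fun x => Real.log (S.T' x)) (S.I i) := by
    intro i
    exact (S.hT'cont i).log (fun x hx => by linarith [S.T'_ge_one i x hx])
  have huc : ∀ i : Fin m, ∃ δ : ℝ, 0 < δ ∧ ∀ x ∈ S.I i, ∀ y ∈ S.I i, dist x y < δ →
      dist (Real.log (S.T' x)) (Real.log (S.T' y)) < η := by
    intro i
    obtain ⟨a, b, hab, hIab⟩ := S.hI i
    have hcpt : IsCompact (S.I i) := hIab ▸ isCompact_Icc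
    have := hcpt.uniformContinuousOn_of_continuous (hcont i)
    rw [Metric.uniformContinuousOn_iff] at this
    obtain ⟨δ, hδ, hp⟩ := this η hη
    exact ⟨δ, hδ, hp⟩
  choose δf hδf hprop using huc
  set δ : ℝ := Finset.univ.inf' Finset.univ_nonempty δf with hδdef
  have hδpos : 0 < δ := by
    rw [hδdef, Finset.lt_inf'_iff]
    exact fun i _ => hδf i
  obtain ⟨N, hN⟩ := S.uniform_diam hδpos
  refine ⟨max N 1, le_max_right _ _, ?_⟩
  rintro (_|⟨i, w⟩) hlen x hx y hy
  · simp at hlen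
  · have hxI : x ∈ S.I i := hx.1
    have hyI : y ∈ S.I i := hy.1
    -- find ω realizing the word
    set w' : List (Fin m) := i :: w with hw'
    have hlen' : N ≤ w'.length := le_trans (le_max_left _ _) hlen
    obtain ⟨ω, hω⟩ : ∃ ω : SymbSp m, word ω w'.length = w' := by
      refine ⟨fun t => if h : t < w'.length then w'.get ⟨t, h⟩ else Classical.arbitrary _, ?_⟩
      have : (fun j : Fin w'.length => (fun t => if h : t < w'.length then w'.get ⟨t, h⟩
          else Classical.arbitrary _) (j : ℕ)) = w'.get := by
        funext j
        simp [j.isLt]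
      rw [word, this, List.ofFn_get]
    have hdiam : Metric.diam (S.cyl w') < δ := by
      rw [← hω]
      exact hN w'.length hlen' ω
    have hdist : dist x y < δf i := by
      calc dist x y ≤ Metric.diam (S.cyl w') := Metric.dist_le_diam_of_mem (S.bounded_cyl w') hx hy
        _ < δ := hdiam
        _ ≤ δf i := Finset.inf'_le δf (Finset.mem_univ i)
    have := hprop i x hxI y hyI hdist
    rw [Real.dist_eq] at this
    exact this.le


lemma core {η : ℝ} (hη : 0 < η) : ∃ N : ℕ, 1 ≤ N ∧ ∀ n, N ≤ n → ∀ ω : SymbSp m,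
    |(-(Real.log (Metric.diam (S.cyl (word ω n))))) / n - birkhoff shift S.g n ω| ≤ η := by
  obtain ⟨B, hB0, hB⟩ := S.log_T'_bound
  obtain ⟨K, hK1, hosc⟩ := S.osc (show 0 < η/2 by linarith)
  obtain ⟨N₁, hN₁⟩ := exists_nat_gt ((2*B*(K:ℝ)) / (η/2))
  refine ⟨max N₁ 1, le_max_right _ _, ?_⟩
  intro n hn ω
  have hn1 : 1 ≤ n := le_trans (le_max_right _ _) hn
  have hnN₁ : N₁ ≤ n := le_trans (le_max_left _ _) hn
  have hnpos : (0:ℝ) < n := by exact_mod_cast hn1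
  obtain ⟨ξ, hmem, heq⟩ := S.log_diam_eq n ω
  set a : ℕ → ℝ := fun j => Real.log (S.T' (ξ j)) with ha
  set b : ℕ → ℝ := fun j => S.g (shift^[j] ω) with hb
  have hbik : birkhoff shift S.g n ω = (∑ j ∈ Finset.range n, b j) / n := by
    rw [birkhoff, smul_eq_mul]
    ring
  have hld : (-(Real.log (Metric.diam (S.cyl (word ω n))))) / n
      = (∑ j ∈ Finset.range n, a j) / n := by
    rw [heq]; ring
  rw [hld, hbik, div_sub_div_same, ← Finset.sum_sub_distrib]
  have hterm : ∀ j ∈ Finset.range n, |a j - b j| ≤ η/2 + (if K ≤ n - j then 0 else 2*B) := by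
    intro j hj
    rw [Finset.mem_range] at hj
    have hlen : (word (shift^[j] ω) (n - j)).length = n - j := word_length
    have hne : word (shift^[j] ω) (n - j) ≠ [] := by
      intro h
      have := congrArg List.length h
      rw [hlen] at this
      simp at this
      omega
    have hcode : S.code (shift^[j] ω) ∈ S.cyl (word (shift^[j] ω) (n - j)) := S.code_mem _ _
    have hxi := hmem j hj
    by_cases hc : K ≤ n - j
    · rw [if_pos hc]
      have := hosc (word (shift^[j] ω) (n - j)) (by rw [hlen]; exact hc) (ξ j) hxi _ hcode
      have hbj : b j = Real.log (S.T' (S.code (shift^[j] ω))) := rfl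
      rw [hbj] at *
      simpa using this
    · rw [if_neg hc]
      have h1 := hB _ hne _ hxi
      have h2 := hB _ hne _ hcode
      have hbj : b j = Real.log (S.T' (S.code (shift^[j] ω))) := rfl
      calc |a j - b j| ≤ |a j| + |b j| := abs_sub _ _
        _ ≤ B + B := by rw [hbj]; exact add_le_add h1 h2
        _ ≤ η/2 + 2*B := by linarith
  have hifs : ∑ j ∈ Finset.range n, (if K ≤ n - j then (0:ℝ) else 2*B) ≤ (K:ℝ) * (2*B) := by
    rw [Finset.sum_ite, Finset.sum_const_zero, zero_add, Finset.sum_const]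
    have hcard : (Finset.filter (fun j => ¬ K ≤ n - j) (Finset.range n)).card ≤ K := by
      have hsub2 : Finset.filter (fun j => ¬ K ≤ n - j) (Finset.range n) ⊆ Finset.Ico (n - K) n := by
        intro j hj
        simp only [Finset.mem_filter, Finset.mem_range, Finset.mem_Ico, not_le] at hj ⊢
        omega
      calc (Finset.filter (fun j => ¬ K ≤ n - j) (Finset.range n)).card
          ≤ (Finset.Ico (n - K) n).card := Finset.card_le_card hsub2
        _ = n - (n - K) := Nat.card_Ico _ _
        _ ≤ K := by omega
    rw [nsmul_eq_mul]
    apply mul_le_mul_of_nonneg_right _ (by linarith)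
    exact_mod_cast hcard
  have hsum : |∑ j ∈ Finset.range n, (a j - b j)| ≤ n * (η/2) + (K:ℝ) * (2*B) := by
    calc |∑ j ∈ Finset.range n, (a j - b j)| ≤ ∑ j ∈ Finset.range n, |a j - b j| :=
          Finset.abs_sum_le_sum_abs _ _
      _ ≤ ∑ j ∈ Finset.range n, (η/2 + (if K ≤ n - j then 0 else 2*B)) :=
          Finset.sum_le_sum hterm
      _ = n * (η/2) + ∑ j ∈ Finset.range n, (if K ≤ n - j then (0:ℝ) else 2*B) := by
          rw [Finset.sum_add_distrib, Finset.sum_const, Finset.card_range, nsmul_eq_mul]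
      _ ≤ n * (η/2) + (K:ℝ) * (2*B) := by linarith [hifs]
  have hKB : (K:ℝ) * (2*B) / n ≤ η/2 := by
    rw [div_le_iff₀ hnpos]
    have h1 : (2*B*(K:ℝ)) < (η/2) * N₁ := by
      rw [div_lt_iff₀ (by linarith : (0:ℝ) < η/2)] at hN₁
      linarith
    have h2 : (N₁:ℝ) ≤ n := by exact_mod_cast hnN₁
    nlinarith [h2, (show (0:ℝ) < η/2 by linarith)]
  rw [abs_div, abs_of_pos hnpos]
  calc |∑ j ∈ Finset.range n, (a j - b j)| / n ≤ (n * (η/2) + (K:ℝ) * (2*B)) / n := by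
        exact div_le_div_of_nonneg_right hsum hnpos.le
    _ = η/2 + (K:ℝ) * (2*B) / n := by field_simp
    _ ≤ η/2 + η/2 := by linarith
    _ = η := by ring


end PCSystem

/-- **Lemma 2 (Statement 5).** The diameters `D_n(ω) = diam I_{ω|_n}` tend to `0`
uniformly in `ω`, and `sup_ω |−(1/n) log D_n(ω) − A_n g(ω)| → 0`. -/
theorem statement5 {m : ℕ} (S : PCSystem m) :
    (∀ ε : ℝ, 0 < ε → ∃ N : ℕ, ∀ n ≥ N, ∀ ω : SymbSp m,
        Metric.diam (S.cyl (word ω n)) < ε) ∧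
    Tendsto (fun n : ℕ => ⨆ ω : SymbSp m,
        |(-(Real.log (Metric.diam (S.cyl (word ω n))))) / n - birkhoff shift S.g n ω|)
      atTop (𝓝 0) := by
  constructor
  · intro ε hε
    obtain ⟨N, hN⟩ := S.uniform_diam hε
    exact ⟨N, fun n hn ω => hN n hn ω⟩
  · rw [Metric.tendsto_atTop]
    intro ε hε
    obtain ⟨N, hN1, hcore⟩ := S.core (show 0 < ε/2 by linarith)
    refine ⟨N, fun n hn => ?_⟩
    rw [Real.dist_eq, sub_zero, abs_of_nonneg (Real.iSup_nonneg (fun ω => abs_nonneg _))]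
    have h1 : (⨆ ω : SymbSp m, |(-(Real.log (Metric.diam (S.cyl (word ω n))))) / n -
        birkhoff shift S.g n ω|) ≤ ε/2 :=
      Real.iSup_le (fun ω => hcore n hn ω) (by linarith)
    linarith
end
end

section
/- Let F: Λ → ℝ^d be continuous, let I be the set of parabolic fixed points of T and A the convex hull of {F(x) : x ∈ I}. If μ ∈ M(Λ,T) satisfies ∫ F dμ = α with α ∉ A, then λ(μ,T) = ∫ log|T'| dμ > 0. -/
open MeasureTheory Set Filter Topology

noncomputable section

lemma PCSystem.one_le_T' {m : ℕ} (S : PCSystem m) :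
    ∀ x ∈ ⋃ i, S.I i, 1 ≤ S.T' x := by
  intro x hx
  obtain ⟨i, hxi⟩ := mem_iUnion.1 hx
  have key : ∀ D : Set ℝ, D ⊆ S.I i → (∀ y ∈ D, y ∉ range S.fixPt) →
      (𝓝[D] x).NeBot → 1 ≤ S.T' x := by
    intro D hDI hDfix h
    have hc : Tendsto S.T' (𝓝[D] x) (𝓝 (S.T' x)) :=
      ((S.hT'cont i x hxi).mono hDI : ContinuousWithinAt _ D x)
    refine ge_of_tendsto hc ?_
    filter_upwards [self_mem_nhdsWithin] with y hy
    exact le_of_lt (S.hexp y (mem_iUnion.2 ⟨i, hDI hy⟩) (hDfix y hy))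
  by_cases hfix : x ∈ range S.fixPt
  · obtain ⟨a, b, hab, hI⟩ := S.hI i
    rw [hI] at hxi
    set K : Set ℝ := range S.fixPt \ {x} with hK
    have hKfin : K.Finite := (Set.finite_range S.fixPt).diff
    have hKc : Kᶜ ∈ 𝓝 x :=
      hKfin.isClosed.isOpen_compl.mem_nhds (fun hxK => hxK.2 rfl)
    rcases lt_or_ge x b with hxb | hbx
    · -- approach from the right
      refine key (Ioi x ∩ (Iio b ∩ Kᶜ)) ?_ ?_ ?_
      · rintro y ⟨hy1, hy2, _⟩
        rw [hI]; exact ⟨le_trans hxi.1 (le_of_lt hy1), le_of_lt hy2⟩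
      · rintro y ⟨hy1, _, hy3⟩ hyr
        exact hy3 ⟨hyr, fun hyx => lt_irrefl x (hyx ▸ hy1)⟩
      · rw [← nhdsWithin_restrict' _ (inter_mem (Iio_mem_nhds hxb) hKc)]
        infer_instance
    · -- x = b : approach from the left
      have hax : a < x := lt_of_lt_of_le hab hbx
      refine key (Iio x ∩ (Ioi a ∩ Kᶜ)) ?_ ?_ ?_
      · rintro y ⟨hy1, hy2, _⟩
        rw [hI]; exact ⟨le_of_lt hy2, le_trans (le_of_lt hy1) hxi.2⟩
      · rintro y ⟨hy1, _, hy3⟩ hyr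
        exact hy3 ⟨hyr, fun hyx => lt_irrefl x (hyx ▸ hy1)⟩
      · rw [← nhdsWithin_restrict' _ (inter_mem (Ioi_mem_nhds hax) hKc)]
        infer_instance
  · exact le_of_lt (S.hexp x hx hfix)

lemma PCSystem.exists_log_bound {m : ℕ} (S : PCSystem m) :
    ∃ C : ℝ, ∀ x ∈ ⋃ i, S.I i, |Real.log (abs (S.T' x))| ≤ C := by
  have hne : (Finset.univ : Finset (Fin m)).Nonempty := by
    have : Nonempty (Fin m) := Fin.pos_iff_nonempty.1 S.hm
    exact Finset.univ_nonempty
  have hCi : ∀ i : Fin m, ∃ Ci : ℝ, ∀ x ∈ S.I i, S.T' x ≤ Ci := by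
    intro i
    obtain ⟨a, b, hab, hI⟩ := S.hI i
    have hcomp : IsCompact (S.I i) := hI ▸ isCompact_Icc
    obtain ⟨z, _, hmax⟩ :=
      hcomp.exists_isMaxOn ⟨S.fixPt i, S.hfixmem i⟩ (S.hT'cont i)
    exact ⟨S.T' z, fun x hx => hmax hx⟩
  choose Ci hCile using hCi
  refine ⟨Real.log (Finset.univ.sup' hne Ci), ?_⟩
  intro x hx
  obtain ⟨i, hxi⟩ := mem_iUnion.1 hx
  have h1 : 1 ≤ S.T' x := S.one_le_T' x hx
  have h0 : (0:ℝ) < S.T' x := lt_of_lt_of_le one_pos h1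
  have habs : |S.T' x| = S.T' x := abs_of_pos h0
  have hlog0 : 0 ≤ Real.log (S.T' x) := Real.log_nonneg h1
  rw [habs, abs_of_nonneg hlog0]
  exact Real.log_le_log h0
    (le_trans (hCile i x hxi) (Finset.le_sup' Ci (Finset.mem_univ i)))

/-- If `μ ∈ M(Λ,T)` satisfies `∫ F dμ = α` with `α ∉ A`, then
`λ(μ,T) = ∫ log|T'| dμ > 0`. -/
theorem statement13 {m d : ℕ} (S : PCSystem m)
    (F : ℝ → EuclideanSpace ℝ (Fin d)) (hF : ContinuousOn F S.attractor)
    (μ : Measure ℝ) (hμ : μ ∈ S.invMeasures)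
    (α : EuclideanSpace ℝ (Fin d)) (hint : (∫ x, F x ∂μ) = α)
    (hαA : α ∉ convexHull ℝ (F '' S.parabolicSet)) :
    0 < S.lyap μ := by
  obtain ⟨hprob, hTinv, hnull⟩ := hμ
  have haeΛ : ∀ᵐ x ∂μ, x ∈ S.attractor := by
    rw [ae_iff]
    exact hnull
  have haeI : ∀ᵐ x ∂μ, x ∈ ⋃ i, S.I i := haeΛ.mono fun x hx => hx.1
  set f : ℝ → ℝ := fun x => Real.log |S.T' x| with hf
  have hmeas : Measurable f :=
    Real.measurable_log.comp S.hT'meas.abs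
  obtain ⟨C, hC⟩ := S.exists_log_bound
  have hint' : Integrable f μ := by
    refine (integrable_const C).mono' hmeas.aestronglyMeasurable ?_
    filter_upwards [haeI] with x hx
    simpa [hf, Real.norm_eq_abs, Real.log_abs] using hC x hx
  have hnonneg : 0 ≤ᵐ[μ] f := by
    filter_upwards [haeI] with x hx
    have h1 : 1 ≤ S.T' x := S.one_le_T' x hx
    exact Real.log_nonneg (le_trans h1 (le_abs_self _))
  have hge : 0 ≤ ∫ x, f x ∂μ := integral_nonneg_of_ae hnonneg
  rcases lt_or_eq_of_le hge with hlt | heq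
  · exact hlt
  exfalso
  have hzero : f =ᵐ[μ] 0 :=
    (integral_eq_zero_iff_of_nonneg_ae hnonneg hint').1 heq.symm
  -- a.e. x is a parabolic fixed point
  have haeP : ∀ᵐ x ∂μ, x ∈ S.parabolicSet := by
    filter_upwards [hzero, haeI] with x hx0 hxI
    have h1 : 1 ≤ S.T' x := S.one_le_T' x hxI
    have h0 : (0:ℝ) < S.T' x := lt_of_lt_of_le one_pos h1
    have habs : |S.T' x| = S.T' x := abs_of_pos h0
    have hT1 : S.T' x = 1 := by
      have : Real.log (S.T' x) = 0 := by
        have := hx0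
        simpa [hf, habs] using this
      have := Real.exp_log h0
      rw [‹Real.log (S.T' x) = 0›, Real.exp_zero] at this
      exact this.symm
    have hxfix : x ∈ range S.fixPt := by
      by_contra h
      exact absurd hT1 (ne_of_gt (S.hexp x hxI h))
    obtain ⟨i, hi⟩ := hxfix
    exact ⟨i, hi.symm, hT1⟩
  -- the parabolic set is finite
  have hPfin : S.parabolicSet.Finite :=
    (Set.finite_range S.fixPt).subset (by rintro y ⟨i, hy, -⟩; exact ⟨i, hy.symm⟩)
  set t : Finset ℝ := hPfin.toFinset with ht
  have htP : (t : Set ℝ) = S.parabolicSet := hPfin.coe_toFinset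
  have hμtc : μ ((t : Set ℝ))ᶜ = 0 := by
    rw [htP]
    exact ae_iff.1 haeP
  -- integral of F as a finite convex combination
  set g : ℝ → EuclideanSpace ℝ (Fin d) :=
    fun x => ∑ p ∈ t, Set.indicator {p} (fun _ => F p) x with hg
  have hFg : F =ᵐ[μ] g := by
    refine measure_mono_null (fun x hx => ?_) hμtc
    simp only [Set.mem_setOf_eq, Set.mem_compl_iff] at hx ⊢
    intro hxt
    apply hx
    show F x = ∑ p ∈ t, Set.indicator {p} (fun _ => F p) x
    rw [Finset.sum_eq_single x]
    · simp
    · intro p hp hpx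
      exact Set.indicator_of_notMem (by simp [hpx.symm]) _
    · intro hxt'; exact absurd (by exact_mod_cast hxt) hxt'
  have hintF : (∫ x, F x ∂μ) = ∑ p ∈ t, (μ {p}).toReal • F p := by
    rw [integral_congr_ae hFg, hg]
    rw [integral_finset_sum t (fun p _ =>
      (integrable_const (F p)).indicator (measurableSet_singleton p))]
    exact Finset.sum_congr rfl fun p _ => integral_indicator_const (F p)
      (measurableSet_singleton p)
  -- weights
  have hμt : μ (t : Set ℝ) = 1 :=
    (prob_compl_eq_zero_iff t.measurableSet).1 hμtc
  have hsum : ∑ p ∈ t, (μ {p}).toReal = 1 := by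
    have hms : (∑ p ∈ t, μ {p}) = μ (t : Set ℝ) := by
      simpa using sum_measure_preimage_singleton (μ := μ) (f := id) t
        (fun y _ => measurableSet_singleton y)
    have : (∑ p ∈ t, μ {p}).toReal = 1 := by rw [hms, hμt]; simp
    rw [← this]
    exact (ENNReal.toReal_sum fun p _ => measure_ne_top μ _).symm
  -- conclude α is in the convex hull
  apply hαA
  have hmem : t.centerMass (fun p => (μ {p}).toReal) F ∈
      convexHull ℝ (F '' S.parabolicSet) := by
    refine Finset.centerMass_mem_convexHull t
      (fun p _ => ENNReal.toReal_nonneg) (by rw [hsum]; exact one_pos) ?_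
    intro p hp
    exact ⟨p, htP ▸ (Set.Finite.mem_toFinset hPfin).1 hp, rfl⟩
  rwa [Finset.centerMass_eq_of_sum_1 _ _ hsum, ← hintF, hint] at hmem
end
end
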